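/- Consider the sampled DPP-RL iteration with parameter η > 0: given an arbitrary sequence of sample next-state functions y_k : X×A → X for k ≥ 0, define the empirical Bellman operator (T_k^{π} Ψ)(x,a) = r(x,a) + γ (π Ψ)(y_k(x,a)) and the iterates Ψ_{k+1}(x,a) = Ψ_k(x,a) + (T_k^{π_k} Ψ_k)(x,a) − (π_k Ψ_k)(x), where π_k is the soft-max policy associated with Ψ_k. If ‖Ψ_0‖ ≤ V_max, then for every k ≥ 0: ‖T_k^{π_k} Ψ_k‖ ≤ 2γ log(L)/(η(1−γ)) + V_max, and the estimation error ε_k = T_k^{π_k} Ψ_k − T^{π_k} Ψ_k satisfies ‖ε_k‖ ≤ 4γ log(L)/(η(1−γ)) + 2 V_max. -/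

import Mathlib

open Finset Real Filter

variable {X A : Type*}

/-- `(πQ)(x) = Σ_a π(a|x) Q(x,a)`. -/
noncomputable def polApply [Fintype A] (pol : X → A → ℝ) (Q : X → A → ℝ) : X → ℝ :=
  fun x => ∑ a, pol x a * Q x a

/-- Bellman operator `T^π`. -/
noncomputable def bellman [Fintype X] [Fintype A]
    (P : X → A → X → ℝ) (r : X → A → ℝ) (γ : ℝ) (pol : X → A → ℝ)
    (Q : X → A → ℝ) : X → A → ℝ :=
  fun x a => r x a + γ * ∑ x', ∑ a', P x a x' * pol x' a' * Q x' a'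

/-- Bellman optimality operator `T`. -/
noncomputable def bellmanOpt [Fintype X] [Fintype A] [Nonempty A]
    (P : X → A → X → ℝ) (r : X → A → ℝ) (γ : ℝ) (Q : X → A → ℝ) : X → A → ℝ :=
  fun x a => r x a + γ * ∑ x', P x a x' * (Finset.univ.sup' Finset.univ_nonempty (Q x'))

/-- Soft-max policy associated with action preferences `Ψ` at inverse temperature `η`. -/
noncomputable def softmaxPol [Fintype A] (η : ℝ) (Ψ : X → A → ℝ) : X → A → ℝ :=
  fun x a => Real.exp (η * Ψ x a) / ∑ a', Real.exp (η * Ψ x a')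

/-- Supremum norm over state-action pairs. -/
noncomputable def supNorm [Fintype X] [Fintype A] [Nonempty X] [Nonempty A]
    (Q : X → A → ℝ) : ℝ :=
  Finset.univ.sup' Finset.univ_nonempty (fun p : X × A => |Q p.1 p.2|)

section aux
variable {A : Type*} [Fintype A] [Nonempty A]

lemma softmax_sum_pos (η : ℝ) (f : A → ℝ) : 0 < ∑ a, Real.exp (η * f a) :=
  Finset.sum_pos (fun a _ => Real.exp_pos _) Finset.univ_nonempty

lemma softmax_sum_one (η : ℝ) (f : A → ℝ) :
    ∑ a, Real.exp (η * f a) / (∑ a', Real.exp (η * f a')) = 1 := by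
  rw [← Finset.sum_div, div_self (softmax_sum_pos η f).ne']

lemma softmax_avg_le (η : ℝ) (f : A → ℝ) :
    ∑ a, (Real.exp (η * f a) / ∑ a', Real.exp (η * f a')) * f a ≤
      Finset.univ.sup' Finset.univ_nonempty f := by
  calc ∑ a, (Real.exp (η * f a) / ∑ a', Real.exp (η * f a')) * f a
      ≤ ∑ a, (Real.exp (η * f a) / ∑ a', Real.exp (η * f a')) *
          Finset.univ.sup' Finset.univ_nonempty f := by
        refine Finset.sum_le_sum fun a _ => ?_
        exact mul_le_mul_of_nonneg_left (Finset.le_sup' f (Finset.mem_univ a))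
          (div_nonneg (Real.exp_pos _).le (softmax_sum_pos η f).le)
    _ = Finset.univ.sup' Finset.univ_nonempty f := by
        rw [← Finset.sum_mul, softmax_sum_one, one_mul]

lemma le_softmax_avg {η : ℝ} (hη : 0 < η) (f : A → ℝ) :
    Finset.univ.sup' Finset.univ_nonempty f - Real.log (Fintype.card A) / η ≤
      ∑ a, (Real.exp (η * f a) / ∑ a', Real.exp (η * f a')) * f a := by
  set S := ∑ a', Real.exp (η * f a') with hSdef
  have hSpos : 0 < S := softmax_sum_pos η f
  set p : A → ℝ := fun a => Real.exp (η * f a) / S with hp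
  have hppos : ∀ a, 0 < p a := fun a => div_pos (Real.exp_pos _) hSpos
  have hpsum : ∑ a, p a = 1 := softmax_sum_one η f
  have jensen : ∑ a, p a * Real.log (1 / p a) ≤ Real.log (∑ a, p a * (1 / p a)) := by
    have := (strictConcaveOn_log_Ioi.concaveOn).le_map_sum
      (t := Finset.univ) (w := p) (p := fun a => 1 / p a)
      (fun a _ => (hppos a).le) hpsum
      (fun a _ => Set.mem_Ioi.mpr (one_div_pos.mpr (hppos a)))
    simpa [smul_eq_mul] using this
  have hsum_inv : ∑ a, p a * (1 / p a) = (Fintype.card A : ℝ) := by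
    have h : ∀ a ∈ Finset.univ, p a * (1 / p a) = 1 := fun a _ => by
      field_simp; exact div_self (hppos a).ne'
    rw [Finset.sum_congr rfl h]
    simp [Finset.card_univ]
  have hlog1p : ∀ a, Real.log (1 / p a) = Real.log S - η * f a := by
    intro a
    rw [hp, one_div_div, Real.log_div hSpos.ne' (Real.exp_pos _).ne', Real.log_exp]
  have h1 : ∑ a, p a * Real.log (1 / p a) = Real.log S - η * ∑ a, p a * f a := by
    have h : ∀ a ∈ Finset.univ, p a * Real.log (1 / p a)
        = p a * Real.log S - η * (p a * f a) := fun a _ => by rw [hlog1p a]; ring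
    rw [Finset.sum_congr rfl h, Finset.sum_sub_distrib, ← Finset.sum_mul, hpsum, one_mul,
      ← Finset.mul_sum]
  rw [h1, hsum_inv] at jensen
  have hsup : η * Finset.univ.sup' Finset.univ_nonempty f ≤ Real.log S := by
    obtain ⟨a₀, -, ha₀⟩ := Finset.exists_mem_eq_sup' Finset.univ_nonempty f
    rw [ha₀, ← Real.log_exp (η * f a₀)]
    exact Real.log_le_log (Real.exp_pos _) (Finset.single_le_sum
      (fun a _ => (Real.exp_pos (η * f a)).le) (Finset.mem_univ a₀))
  have key : η * Finset.univ.sup' Finset.univ_nonempty f ≤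
      η * ∑ a, p a * f a + Real.log (Fintype.card A) := by linarith
  rw [sub_le_iff_le_add, ← mul_le_mul_iff_right₀ hη, mul_add, mul_div_cancel₀ _ hη.ne']
  exact key

end aux

/-- Lemma 7 of the paper (stability of DPP-RL): the empirical Bellman operator values
and the estimation errors of the sampled DPP-RL iteration are uniformly bounded. -/
theorem dpp_rl_stability
    {X A : Type*} [Fintype X] [Fintype A] [Nonempty X] [Nonempty A]
    (P : X → A → X → ℝ) (hP0 : ∀ x a x', 0 ≤ P x a x') (hP1 : ∀ x a, ∑ x', P x a x' = 1)
    (r : X → A → ℝ) (Rmax : ℝ) (hR : 0 < Rmax) (hr : ∀ x a, |r x a| ≤ Rmax)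
    (γ : ℝ) (hγ0 : 0 ≤ γ) (hγ1 : γ < 1)
    (Vmax : ℝ) (hV : Vmax = Rmax / (1 - γ))
    (η : ℝ) (hη : 0 < η)
    (y : ℕ → X → A → X)
    (Ψ : ℕ → X → A → ℝ) (hΨ0 : supNorm (Ψ 0) ≤ Vmax)
    (pol : ℕ → X → A → ℝ) (hpol : ∀ k, pol k = softmaxPol η (Ψ k))
    (hΨ : ∀ k x a, Ψ (k + 1) x a =
      Ψ k x a + (r x a + γ * polApply (pol k) (Ψ k) (y k x a)) -
        polApply (pol k) (Ψ k) x) :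
    ∀ k : ℕ,
      supNorm (fun x a => r x a + γ * polApply (pol k) (Ψ k) (y k x a)) ≤
        2 * γ * Real.log (Fintype.card A) / (η * (1 - γ)) + Vmax ∧
      supNorm (fun x a =>
          (r x a + γ * polApply (pol k) (Ψ k) (y k x a)) -
            bellman P r γ (pol k) (Ψ k) x a) ≤
        4 * γ * Real.log (Fintype.card A) / (η * (1 - γ)) + 2 * Vmax := by
  have hone : (1 : ℝ) ≤ (Fintype.card A : ℝ) := by exact_mod_cast Fintype.card_pos
  have hγ' : 0 < 1 - γ := by linarith
  have hVpos : 0 < Vmax := by rw [hV]; positivity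
  obtain ⟨c, hc⟩ : ∃ c : ℝ, c = Real.log (Fintype.card A) / η := ⟨_, rfl⟩
  have hc0 : 0 ≤ c := hc ▸ div_nonneg (Real.log_nonneg hone) hη.le
  obtain ⟨B, hB⟩ : ∃ B : ℝ, B = Vmax + 2 * c / (1 - γ) := ⟨_, rfl⟩
  have hRmax : Rmax + γ * Vmax = Vmax := by
    rw [hV]; field_simp; ring
  have hBexp : B - γ * B = Rmax + 2 * c := by
    rw [hB]; field_simp; nlinarith [hRmax]
  have hgB : γ * B = γ * Vmax + 2 * γ * c / (1 - γ) := by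
    rw [hB]; field_simp
  -- upper and lower bounds for the soft-max average
  have hub : ∀ k x, polApply (pol k) (Ψ k) x ≤
      Finset.univ.sup' Finset.univ_nonempty (Ψ k x) := by
    intro k x; rw [hpol k]
    exact softmax_avg_le η (Ψ k x)
  have hlb : ∀ k x, Finset.univ.sup' Finset.univ_nonempty (Ψ k x) - c ≤
      polApply (pol k) (Ψ k) x := by
    intro k x; rw [hpol k, hc]
    exact le_softmax_avg hη (Ψ k x)
  -- bound on the initial Ψ
  have hΨ0' : ∀ x a, |Ψ 0 x a| ≤ Vmax := fun x a =>
    le_trans (Finset.le_sup' (fun p : X × A => |Ψ 0 p.1 p.2|) (Finset.mem_univ (x, a))) hΨ0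
  -- the invariant: soft-max averages are bounded by B
  have inv : ∀ k x, |polApply (pol k) (Ψ k) x| ≤ B := by
    intro k
    induction k with
    | zero =>
      intro x
      have hcB : Vmax + c ≤ B := by
        have h2c : c ≤ 2 * c / (1 - γ) := by
          rw [le_div_iff₀ hγ']; nlinarith
        rw [hB]; linarith
      rw [abs_le]
      constructor
      · obtain ⟨a₀, -, ha₀⟩ := Finset.exists_mem_eq_sup' Finset.univ_nonempty (Ψ 0 x)
        have h1 := hlb 0 x
        rw [ha₀] at h1
        have h2 := (abs_le.1 (hΨ0' x a₀)).1
        linarith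
      · have h1 := hub 0 x
        have h2 : Finset.univ.sup' Finset.univ_nonempty (Ψ 0 x) ≤ Vmax :=
          Finset.sup'_le _ _ fun a _ => (abs_le.1 (hΨ0' x a)).2
        linarith
    | succ k ih =>
      intro x
      have hsup_ub : ∀ a, Ψ (k + 1) x a ≤ c + Rmax + γ * B := by
        intro a
        rw [hΨ k x a]
        have h1 : Ψ k x a ≤ polApply (pol k) (Ψ k) x + c := by
          have := hlb k x
          have h2 := Finset.le_sup' (Ψ k x) (Finset.mem_univ a)
          linarith
        have h3 := (abs_le.1 (hr x a)).2
        have h4 := (abs_le.1 (ih (y k x a))).2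
        have h5 : γ * polApply (pol k) (Ψ k) (y k x a) ≤ γ * B :=
          mul_le_mul_of_nonneg_left h4 hγ0
        linarith
      have hub1 : polApply (pol (k + 1)) (Ψ (k + 1)) x ≤ c + Rmax + γ * B :=
        (hub (k + 1) x).trans (Finset.sup'_le _ _ fun a _ => hsup_ub a)
      obtain ⟨a₀, -, ha₀⟩ := Finset.exists_mem_eq_sup' Finset.univ_nonempty (Ψ k x)
      have h2 : polApply (pol k) (Ψ k) x ≤ Ψ k x a₀ := by
        have := hub k x; rw [ha₀] at this; exact this
      have h3 : -Rmax - γ * B ≤ Ψ (k + 1) x a₀ := by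
        rw [hΨ k x a₀]
        have h4 := (abs_le.1 (hr x a₀)).1
        have h5 := (abs_le.1 (ih (y k x a₀))).1
        have h6 : γ * (-B) ≤ γ * polApply (pol k) (Ψ k) (y k x a₀) :=
          mul_le_mul_of_nonneg_left h5 hγ0
        nlinarith
      have hlb1 : -Rmax - γ * B - c ≤ polApply (pol (k + 1)) (Ψ (k + 1)) x := by
        have h7 := hlb (k + 1) x
        have h8 : Ψ (k + 1) x a₀ ≤ Finset.univ.sup' Finset.univ_nonempty (Ψ (k + 1) x) :=
          Finset.le_sup' (Ψ (k + 1) x) (Finset.mem_univ a₀)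
        linarith
      rw [abs_le]
      constructor <;> linarith
  -- the two conclusions
  intro k
  have hRHS1 : 2 * γ * Real.log (Fintype.card A) / (η * (1 - γ)) = 2 * γ * c / (1 - γ) := by
    rw [hc]; field_simp
  have hRHS2 : 4 * γ * Real.log (Fintype.card A) / (η * (1 - γ)) = 4 * γ * c / (1 - γ) := by
    rw [hc]; field_simp
  constructor
  · rw [hRHS1]
    refine Finset.sup'_le _ _ fun q _ => ?_
    obtain ⟨x, a⟩ := q
    have h1 := abs_le.1 (hr x a)
    have h2 := abs_le.1 (inv k (y k x a))
    have h3 : γ * polApply (pol k) (Ψ k) (y k x a) ≤ γ * B :=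
      mul_le_mul_of_nonneg_left h2.2 hγ0
    have h4 : γ * (-B) ≤ γ * polApply (pol k) (Ψ k) (y k x a) :=
      mul_le_mul_of_nonneg_left h2.1 hγ0
    have h5 : 0 ≤ 2 * γ * c / (1 - γ) := by positivity
    dsimp only
    rw [abs_le]
    constructor
    · linarith
    · linarith
  · rw [hRHS2]
    refine Finset.sup'_le _ _ fun q _ => ?_
    obtain ⟨x, a⟩ := q
    dsimp only
    have hbell : (∑ x', ∑ a', P x a x' * pol k x' a' * Ψ k x' a') =
        ∑ x', P x a x' * polApply (pol k) (Ψ k) x' := by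
      refine Finset.sum_congr rfl fun x' _ => ?_
      rw [polApply, Finset.mul_sum]
      exact Finset.sum_congr rfl fun a' _ => by ring
    have hPM : |∑ x', P x a x' * polApply (pol k) (Ψ k) x'| ≤ B := by
      calc |∑ x', P x a x' * polApply (pol k) (Ψ k) x'|
          ≤ ∑ x', |P x a x' * polApply (pol k) (Ψ k) x'| :=
            Finset.abs_sum_le_sum_abs _ _
        _ ≤ ∑ x', P x a x' * B := by
            refine Finset.sum_le_sum fun x' _ => ?_
            rw [abs_mul, abs_of_nonneg (hP0 x a x')]
            exact mul_le_mul_of_nonneg_left (inv k x') (hP0 x a x')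
        _ = B := by rw [← Finset.sum_mul, hP1, one_mul]
    have heq : r x a + γ * polApply (pol k) (Ψ k) (y k x a) -
        bellman P r γ (pol k) (Ψ k) x a =
        γ * polApply (pol k) (Ψ k) (y k x a) -
          γ * ∑ x', P x a x' * polApply (pol k) (Ψ k) x' := by
      simp only [bellman]
      rw [hbell]
      ring
    rw [heq]
    have h2 := abs_le.1 (inv k (y k x a))
    have h3 := abs_le.1 hPM
    have h4 : γ * polApply (pol k) (Ψ k) (y k x a) ≤ γ * B :=
      mul_le_mul_of_nonneg_left h2.2 hγ0
    have h5 : γ * (-B) ≤ γ * polApply (pol k) (Ψ k) (y k x a) :=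
      mul_le_mul_of_nonneg_left h2.1 hγ0
    have h6 : γ * (∑ x', P x a x' * polApply (pol k) (Ψ k) x') ≤ γ * B :=
      mul_le_mul_of_nonneg_left h3.2 hγ0
    have h7 : γ * (-B) ≤ γ * (∑ x', P x a x' * polApply (pol k) (Ψ k) x') :=
      mul_le_mul_of_nonneg_left h3.1 hγ0
    have hγV2 : 2 * (γ * B) ≤ 2 * Vmax + 4 * γ * c / (1 - γ) := by
      rw [hgB]
      have : γ * Vmax ≤ Vmax := by nlinarith
      have h9 : 2 * (2 * γ * c / (1 - γ)) = 4 * γ * c / (1 - γ) := by ring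
      linarith
    rw [abs_le]
    have hγV : γ * Vmax ≤ Vmax := by nlinarith
    constructor <;> linarith
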